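/- If f is submodular and ĝ(S) = min_{T ⊇ S} f(T), then ĝ is monotone and submodular, and defines the same polymatroid as f (i.e. {x ≥ 0 : x(S) ≤ f(S) ∀S} = {x ≥ 0 : x(S) ≤ ĝ(S) ∀S}). -/
import Mathlib


/-- `monotonization f S = min_{T ⊇ S} f T`. -/
noncomputable def monotonization (n : ℕ) (f : Finset (Fin n) → ℝ)
    (S : Finset (Fin n)) : ℝ :=
  ((Finset.univ : Finset (Finset (Fin n))).filter (fun T => S ⊆ T)).inf'
    ⟨S, by simp⟩ f

lemma monotonization_le {n : ℕ} (f : Finset (Fin n) → ℝ) {S T : Finset (Fin n)}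
    (h : S ⊆ T) : monotonization n f S ≤ f T :=
  Finset.inf'_le _ (by simp [h])

lemma exists_monotonization {n : ℕ} (f : Finset (Fin n) → ℝ) (S : Finset (Fin n)) :
    ∃ T, S ⊆ T ∧ monotonization n f S = f T := by
  obtain ⟨T, hT, hEq⟩ := Finset.exists_mem_eq_inf'
    (s := (Finset.univ : Finset (Finset (Fin n))).filter (fun T => S ⊆ T))
    ⟨S, by simp⟩ f
  exact ⟨T, by simpa using hT, hEq⟩

theorem monotonization_spec (n : ℕ) (f : Finset (Fin n) → ℝ)
    (hsub : ∀ S T : Finset (Fin n), f (S ∪ T) + f (S ∩ T) ≤ f S + f T) :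
    (∀ S T : Finset (Fin n), S ⊆ T → monotonization n f S ≤ monotonization n f T) ∧
    (∀ S T : Finset (Fin n),
        monotonization n f (S ∪ T) + monotonization n f (S ∩ T)
          ≤ monotonization n f S + monotonization n f T) ∧
    {x : Fin n → ℝ | (∀ i, 0 ≤ x i) ∧ ∀ S : Finset (Fin n), ∑ i ∈ S, x i ≤ f S}
      = {x : Fin n → ℝ | (∀ i, 0 ≤ x i) ∧
          ∀ S : Finset (Fin n), ∑ i ∈ S, x i ≤ monotonization n f S} := by
  refine ⟨?_, ?_, ?_⟩
  · intro S T hST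
    obtain ⟨U, hTU, hU⟩ := exists_monotonization f T
    rw [hU]
    exact monotonization_le f (hST.trans hTU)
  · intro S T
    obtain ⟨A, hA, hAe⟩ := exists_monotonization f S
    obtain ⟨B, hB, hBe⟩ := exists_monotonization f T
    rw [hAe, hBe]
    calc monotonization n f (S ∪ T) + monotonization n f (S ∩ T)
        ≤ f (A ∪ B) + f (A ∩ B) := by
          gcongr
          · exact monotonization_le f (Finset.union_subset_union hA hB)
          · exact monotonization_le f (Finset.inter_subset_inter hA hB)
      _ ≤ f A + f B := hsub A B
  · ext x
    simp only [Set.mem_setOf_eq]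
    constructor
    · rintro ⟨hx, hS⟩
      refine ⟨hx, fun S => ?_⟩
      obtain ⟨T, hST, hT⟩ := exists_monotonization f S
      rw [hT]
      calc ∑ i ∈ S, x i ≤ ∑ i ∈ T, x i :=
            Finset.sum_le_sum_of_subset_of_nonneg hST (fun i _ _ => hx i)
        _ ≤ f T := hS T
    · rintro ⟨hx, hS⟩
      exact ⟨hx, fun S => (hS S).trans (monotonization_le f (subset_refl S))⟩
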